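/- Let (ξ_j)_{j ∈ ℤ} be i.i.d. nonnegative random variables such that for every μ ∈ (0,1), limsup_{t→∞} μ^{-t} P(ξ_0 > t) = ∞. Fix δ > 0 and a > 0, and define B_n = { max_{1 ≤ i ≤ e^{δn}} ξ_i > an }. Then limsup_{n→∞} P(B_n) = 1. -/

import Mathlib

open MeasureTheory ProbabilityTheory
open scoped ENNReal

set_option maxHeartbeats 1000000 in
theorem stmt_12 {Ω : Type*} [MeasurableSpace Ω] (P : Measure Ω)
    [IsProbabilityMeasure P] (ξ : ℤ → Ω → ℝ) (hmeas : ∀ i, Measurable (ξ i))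
    (hnonneg : ∀ i ω, 0 ≤ ξ i ω)
    (hindep : iIndepFun ξ P)
    (hident : ∀ i, Measure.map (ξ i) P = Measure.map (ξ 0) P)
    (htail : ∀ μ : ℝ, 0 < μ → μ < 1 →
      Filter.limsup
        (fun t : ℕ => P {ω | (t : ℝ) < ξ 0 ω} / ENNReal.ofReal (μ ^ t))
        Filter.atTop = ∞)
    (δ a : ℝ) (hδ : 0 < δ) (ha : 0 < a) :
    Filter.limsup
      (fun n : ℕ =>
        P {ω | ∃ i : ℤ, 1 ≤ i ∧ (i : ℝ) ≤ Real.exp (δ * n) ∧ a * n < ξ i ω})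
      Filter.atTop = 1 := by
  set u : ℕ → ℝ≥0∞ := fun n =>
    P {ω | ∃ i : ℤ, 1 ≤ i ∧ (i : ℝ) ≤ Real.exp (δ * n) ∧ a * n < ξ i ω} with hu
  set r : ℝ := δ / (2 * a) with hrdef
  have hr : 0 < r := div_pos hδ (by positivity)
  have hμ0 : (0:ℝ) < Real.exp (-r) := Real.exp_pos _
  have hμ1 : Real.exp (-r) < 1 := Real.exp_lt_one_iff.mpr (by linarith)
  have hlim := htail (Real.exp (-r)) hμ0 hμ1
  -- frequently the tail is large
  have hfreq : ∃ᶠ t : ℕ in Filter.atTop,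
      ENNReal.ofReal (Real.exp (-r) ^ t) < P {ω | (t : ℝ) < ξ 0 ω} := by
    have h1 : (1 : ℝ≥0∞) <
        Filter.limsup
          (fun t : ℕ => P {ω | (t : ℝ) < ξ 0 ω} / ENNReal.ofReal (Real.exp (-r) ^ t))
          Filter.atTop := by
      rw [hlim]; exact ENNReal.one_lt_top
    have h2 := Filter.frequently_lt_of_lt_limsup (by isBoundedDefault) h1
    refine h2.mono fun t ht => ?_
    by_contra hcon
    push_neg at hcon
    exact absurd (ENNReal.div_le_of_le_mul (by simpa using hcon)) (not_le.mpr ht)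
  -- key pointwise estimate, along a subsequence
  have key : ∀ c' : ℝ≥0∞, c' < 1 → ∃ᶠ n : ℕ in Filter.atTop, c' ≤ u n := by
    intro c' hc'
    have hc'top : c' ≠ ⊤ := hc'.ne_top
    have hc'r : c'.toReal < 1 := by
      have := (ENNReal.toReal_lt_toReal hc'top (by simp)).mpr hc'
      simpa using this
    set ε : ℝ := 1 - c'.toReal with hεdef
    have hε : 0 < ε := hεdef ▸ sub_pos.mpr hc'r
    set K : ℝ := -Real.log ε + 1 with hKdef
    have hK : Real.exp (-K) < ε := by
      have : Real.exp (-K) = ε * Real.exp (-1) := by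
        rw [hKdef]
        rw [show -(-Real.log ε + 1) = Real.log ε + (-1) by ring, Real.exp_add,
          Real.exp_log hε]
      rw [this]
      nlinarith [Real.exp_lt_one_iff.mpr (show (-1:ℝ) < 0 by norm_num)]
    have hK1 : (0:ℝ) < K + 1 := by
      have hl : Real.log ε ≤ 0 := Real.log_nonpos (le_of_lt hε) (by rw [hεdef]; linarith [ENNReal.toReal_nonneg (a := c')])
      rw [hKdef]; linarith
    rw [Filter.frequently_atTop]
    intro N₀
    obtain ⟨T, hT⟩ := exists_nat_ge (max (a * (N₀ + 1)) ((δ + Real.log (K + 1)) / r))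
    obtain ⟨t, htT, htail'⟩ := Filter.frequently_atTop.mp hfreq T
    have htr1 : a * (N₀ + 1) ≤ (t:ℝ) :=
      le_trans (le_max_left _ _) (hT.trans (Nat.cast_le.mpr htT))
    have htr2 : (δ + Real.log (K + 1)) / r ≤ (t:ℝ) :=
      le_trans (le_max_right _ _) (hT.trans (Nat.cast_le.mpr htT))
    set n : ℕ := ⌊(t:ℝ) / a⌋₊ with hn
    refine ⟨n, ?_, ?_⟩
    · -- n ≥ N₀
      have : (N₀ : ℝ) ≤ (t:ℝ) / a := by
        rw [le_div_iff₀ ha]; nlinarith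
      exact Nat.le_floor this
    · -- the probability estimate
      have han : a * (n:ℝ) ≤ (t:ℝ) := by
        have h1 : (n:ℝ) ≤ (t:ℝ) / a := Nat.floor_le (by positivity)
        calc a * (n:ℝ) ≤ a * ((t:ℝ)/a) := by nlinarith
          _ = (t:ℝ) := by field_simp
      have hnt : (t:ℝ)/a - 1 < (n:ℝ) := Nat.sub_one_lt_floor _
      set E : ℝ := Real.exp (δ * n) with hE
      have hE1 : (1:ℝ) ≤ E := Real.one_le_exp (by positivity)
      set m : ℤ := ⌊E⌋ with hm
      have hm0 : 0 ≤ m := Int.floor_nonneg.mpr (by linarith)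
      set s : Finset ℤ := Finset.Icc 1 m with hs
      set N : ℕ := s.card with hN
      have hNm : (N:ℝ) = (m:ℝ) := by
        rw [hN, hs, Int.card_Icc]
        rw [show m + 1 - 1 = m by ring]
        rw [← Int.cast_natCast, Int.toNat_of_nonneg hm0]
      -- set identity
      have hset : {ω | ∃ i : ℤ, 1 ≤ i ∧ (i : ℝ) ≤ Real.exp (δ * n) ∧ a * n < ξ i ω}
          = (⋂ i ∈ s, ξ i ⁻¹' Set.Iic (a * (n:ℝ)))ᶜ := by
        ext ω
        simp only [Set.mem_setOf_eq, Set.mem_compl_iff, Set.mem_iInter, Set.mem_preimage,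
          Set.mem_Iic, hs, Finset.mem_Icc, not_forall, not_le]
        constructor
        · rintro ⟨i, h1, h2, h3⟩
          exact ⟨i, ⟨h1, Int.le_floor.mpr h2⟩, h3⟩
        · rintro ⟨i, ⟨h1, h2⟩, h3⟩
          exact ⟨i, h1, Int.le_floor.mp h2, h3⟩
      have hmeasInter : MeasurableSet (⋂ i ∈ s, ξ i ⁻¹' Set.Iic (a * (n:ℝ))) :=
        MeasurableSet.biInter s.countable_toSet (fun i _ => (hmeas i) measurableSet_Iic)
      set q : ℝ≥0∞ := P (ξ 0 ⁻¹' Set.Iic (a * (n:ℝ))) with hq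
      set p : ℝ≥0∞ := P (ξ 0 ⁻¹' Set.Ioi (a * (n:ℝ))) with hp
      have hfac : ∀ i : ℤ, P (ξ i ⁻¹' Set.Iic (a * (n:ℝ))) = q := fun i => by
        rw [hq, ← Measure.map_apply (hmeas i) measurableSet_Iic, hident i,
          Measure.map_apply (hmeas 0) measurableSet_Iic]
      have hprod : P (⋂ i ∈ s, ξ i ⁻¹' Set.Iic (a * (n:ℝ))) = q ^ N := by
        rw [hindep.measure_inter_preimage_eq_mul s
          (sets := fun _ => Set.Iic (a * (n:ℝ))) (fun i _ => measurableSet_Iic)]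
        rw [Finset.prod_congr rfl (fun i _ => hfac i), Finset.prod_const, hN]
      have hBn : u n = 1 - q ^ N := by
        rw [hu]
        simp only
        rw [hset, prob_compl_eq_one_sub hmeasInter, hprod]
      -- real-number computations
      have hqtop : q ≠ ⊤ := measure_ne_top _ _
      have hptop : p ≠ ⊤ := measure_ne_top _ _
      set qr : ℝ := q.toReal with hqr
      set pr : ℝ := p.toReal with hpr
      have hqp : qr + pr = 1 := by
        have hco : (ξ 0 ⁻¹' Set.Iic (a * (n:ℝ)))ᶜ = ξ 0 ⁻¹' Set.Ioi (a * (n:ℝ)) := by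
          rw [← Set.preimage_compl, Set.compl_Iic]
        have h2 : q + p = 1 := by
          have h := measure_add_measure_compl (μ := P) ((hmeas 0) measurableSet_Iic :
            MeasurableSet (ξ 0 ⁻¹' Set.Iic (a * (n:ℝ))))
          rwa [hco, measure_univ] at h
        rw [hqr, hpr, ← ENNReal.toReal_add hqtop hptop, h2, ENNReal.toReal_one]
      have hqr0 : 0 ≤ qr := ENNReal.toReal_nonneg
      -- lower bound on pr
      have hple : ENNReal.ofReal (Real.exp (-r) ^ t) ≤ p := by
        refine le_trans (le_of_lt htail') (measure_mono ?_)
        intro ω hω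
        simp only [Set.mem_setOf_eq] at hω
        simp only [Set.mem_preimage, Set.mem_Ioi]
        linarith
      have hprlb : Real.exp (-(r * t)) ≤ pr := by
        have := (ENNReal.ofReal_le_iff_le_toReal hptop).mp hple
        rwa [← Real.exp_nat_mul, show (t:ℝ) * (-r) = -(r*t) by ring] at this
      -- lower bound on N * pr
      have hEN : E - 1 ≤ (N:ℝ) := by
        rw [hNm]; have := Int.sub_one_lt_floor E; linarith
      have hδn : 2 * r * t - δ ≤ δ * n := by
        have h2r : δ / a = 2 * r := by rw [hrdef]; field_simp
        have : δ * ((t:ℝ)/a - 1) ≤ δ * n := by nlinarith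
        calc 2 * r * t - δ = δ * ((t:ℝ)/a - 1) := by
              rw [← h2r]; field_simp
          _ ≤ δ * n := this
      have hrt : δ + Real.log (K + 1) ≤ r * t := by
        rw [div_le_iff₀ hr] at htr2; linarith
      have hNpr : K ≤ (N:ℝ) * pr := by
        have e1 : Real.exp (2*r*t - δ) ≤ E := by
          rw [hE]; exact Real.exp_le_exp.mpr hδn
        have e2 : Real.exp (2*r*t - δ) * Real.exp (-(r*t)) = Real.exp (r*t - δ) := by
          rw [← Real.exp_add]; ring_nf
        have e3 : K + 1 ≤ Real.exp (r*t - δ) := by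
          calc K + 1 = Real.exp (Real.log (K+1)) := (Real.exp_log hK1).symm
            _ ≤ Real.exp (r*t - δ) := Real.exp_le_exp.mpr (by linarith)
        have e4 : Real.exp (-(r*t)) ≤ 1 := Real.exp_le_one_iff.mpr (neg_nonpos.mpr (by positivity))
        have e5 : (0:ℝ) < Real.exp (-(r*t)) := Real.exp_pos _
        have e6 : (E - 1) * Real.exp (-(r*t)) ≤ (N:ℝ) * pr := by
          have hpr0 : 0 ≤ pr := ENNReal.toReal_nonneg
          have hE1' : (0:ℝ) ≤ E - 1 := by linarith
          exact mul_le_mul hEN hprlb (le_of_lt e5) (by linarith [hEN, hE1'])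
        have e7 : (Real.exp (2*r*t-δ) - 1) * Real.exp (-(r*t)) ≤ (E-1) * Real.exp (-(r*t)) :=
          mul_le_mul_of_nonneg_right (by linarith) (le_of_lt e5)
        have e8 : K ≤ (Real.exp (2*r*t-δ) - 1) * Real.exp (-(r*t)) := by
          have e9 : (Real.exp (2*r*t-δ) - 1) * Real.exp (-(r*t))
              = Real.exp (r*t-δ) - Real.exp (-(r*t)) := by
            rw [sub_mul, e2, one_mul]
          rw [e9]; linarith
        linarith [e6, e7, e8]
      -- conclude
      have hqpow : qr ^ N ≤ ε := by
        have h1 : qr ≤ Real.exp (-pr) := by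
          have := Real.add_one_le_exp (-pr); linarith
        have h2 : qr ^ N ≤ Real.exp (-pr) ^ N := pow_le_pow_left₀ hqr0 h1 N
        have h3 : Real.exp (-pr) ^ N = Real.exp ((N:ℝ) * (-pr)) := (Real.exp_nat_mul _ N).symm
        have h4 : Real.exp ((N:ℝ) * (-pr)) ≤ Real.exp (-K) :=
          Real.exp_le_exp.mpr (by nlinarith)
        calc qr ^ N ≤ Real.exp ((N:ℝ)*(-pr)) := by rw [← h3]; exact h2
          _ ≤ Real.exp (-K) := h4
          _ ≤ ε := le_of_lt hK
      have hq1 : q ^ N ≤ 1 := pow_le_one' prob_le_one N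
      have hfin : (u n).toReal = 1 - qr ^ N := by
        rw [hBn, ENNReal.toReal_sub_of_le hq1 (by simp), ENNReal.toReal_pow,
          ENNReal.toReal_one, hqr]
      have : c'.toReal ≤ (u n).toReal := by
        rw [hfin]; linarith [hqpow]
      have hutop : u n ≠ ⊤ := by rw [hBn]; exact (tsub_le_self.trans_lt ENNReal.one_lt_top).ne
      exact (ENNReal.toReal_le_toReal hc'top hutop).mp this
  -- combine
  apply le_antisymm
  · exact Filter.limsup_le_of_le (by isBoundedDefault)
      (Filter.Eventually.of_forall fun n => prob_le_one)
  · refine le_of_forall_lt fun c hc => ?_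
    obtain ⟨c', hcc', hc'1⟩ := exists_between hc
    exact lt_of_lt_of_le hcc' (Filter.le_limsup_of_frequently_le (key c' hc'1)
      (by isBoundedDefault))
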